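/- Let ((Aₙ),(Ψₙ)) be a factorable weak operator-valued frame in B(H,H₀) with frame operator S := S_{A,Ψ}. Suppose (Bₙ) is a sequence of bounded operators from H to H₀ for which there exist α, β, γ ≥ 0 with max{α + γ‖θ_Ψ (S*)⁻¹‖, β} < 1 such that for every m ∈ ℕ and every y ∈ ℓ²(ℕ,H₀): ‖Σ_{n=1}^m (Aₙ* − Bₙ*) Lₙ* y‖ ≤ α ‖Σ_{n=1}^m Aₙ* Lₙ* y‖ + β ‖Σ_{n=1}^m Bₙ* Lₙ* y‖ + γ (Σ_{n=1}^m ‖Lₙ* y‖²)^{1/2}. Then ((Bₙ),(Ψₙ)) is a factorable weak OVF in B(H,H₀) with frame bounds (1 − (α + γ‖θ_Ψ (S*)⁻¹‖)) / ((1+β)‖(S*)⁻¹‖) and ‖θ_Ψ‖((1+α)‖θ_A‖ + γ) / (1 − β). -/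

import Mathlib

noncomputable section

open ContinuousLinearMap Filter

variable {H H₀ : Type*} [NormedAddCommGroup H] [InnerProductSpace ℂ H] [CompleteSpace H]
  [NormedAddCommGroup H₀] [InnerProductSpace ℂ H₀] [CompleteSpace H₀]

/-- `ℓ²(I, H₀)`: square-summable `H₀`-valued families indexed by `I`. -/
abbrev l2 (I : Type*) (H₀ : Type*) [NormedAddCommGroup H₀] : Type _ :=
  lp (fun _ : I => H₀) 2

/-- The isometry `Lᵢ : H₀ → ℓ²(I,H₀)` sending `h` to the family equal to `h` at index `i`
and `0` elsewhere. -/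
def Lop {I : Type*} [DecidableEq I] (i : I) : H₀ →L[ℂ] l2 I H₀ :=
  LinearMap.mkContinuous
    { toFun := fun h => lp.single 2 i h
      map_add' := by
        intro a b
        apply lp.ext
        funext j
        by_cases hj : j = i
        · subst hj; simp [lp.single_apply_self]
        · simp [lp.single_apply_ne _ _ _ hj, lp.coeFn_add]
      map_smul' := by
        intro c a
        simp [lp.single_smul] }
    1
    (by
      intro h
      simpa using (lp.norm_single (p := 2) (by norm_num) (fun _ : I => h) i).le)

/-- Convergence of the sequence of partial sums `∑_{n < m} f n` to `x` as `m → ∞`. -/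
def SeqSum {E : Type*} [AddCommMonoid E] [TopologicalSpace E] (f : ℕ → E) (x : E) : Prop :=
  Tendsto (fun m => ∑ n ∈ Finset.range m, f n) atTop (nhds x)

set_option linter.unusedSectionVars false

local notation "⟪" x ", " y "⟫" => @inner ℂ _ _ x y

lemma Lop_apply (i : ℕ) (x : H₀) : (Lop i x : l2 ℕ H₀) = lp.single 2 i x := rfl

lemma Lop_adj (i : ℕ) (y : l2 ℕ H₀) : adjoint (Lop i) y = y i := by
  apply ext_inner_right ℂ
  intro x
  rw [adjoint_inner_left, Lop_apply, lp.inner_single_right]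

lemma norm_sum_Lop (f : ℕ → H₀) (s : Finset ℕ) :
    ‖∑ n ∈ s, (Lop n (f n) : l2 ℕ H₀)‖ ^ 2 = ∑ n ∈ s, ‖f n‖ ^ 2 := by
  have := lp.norm_sum_single (p := 2) (E := fun _ : ℕ => H₀) (by norm_num) f s
  simp only [ENNReal.toReal_ofNat] at this
  simp only [Lop_apply]
  rw [← Real.rpow_natCast, Nat.cast_ofNat, this]
  congr 1
  ext n
  rw [← Real.rpow_natCast, Nat.cast_ofNat]

lemma sum_sq_coord_le (y : l2 ℕ H₀) (s : Finset ℕ) :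
    ∑ n ∈ s, ‖adjoint (Lop n) y‖ ^ 2 ≤ ‖y‖ ^ 2 := by
  have := lp.sum_rpow_le_norm_rpow (p := 2) (E := fun _ : ℕ => H₀) (by norm_num) y s
  simp only [ENNReal.toReal_ofNat] at this
  calc ∑ n ∈ s, ‖adjoint (Lop n) y‖ ^ 2 = ∑ n ∈ s, ‖y n‖ ^ (2:ℝ) := by
        refine Finset.sum_congr rfl fun n _ => ?_
        rw [Lop_adj, ← Real.rpow_natCast, Nat.cast_ofNat]
    _ ≤ ‖y‖ ^ (2:ℝ) := this
    _ = ‖y‖ ^ 2 := by rw [← Real.rpow_natCast, Nat.cast_ofNat]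

lemma trunc_tendsto (y : l2 ℕ H₀) :
    Tendsto (fun m => ∑ n ∈ Finset.range m, (Lop n (adjoint (Lop n) y) : l2 ℕ H₀))
      atTop (nhds y) := by
  have h := (lp.hasSum_single (E := fun _ : ℕ => H₀) ENNReal.ofNat_ne_top y).tendsto_sum_nat
  convert h using 2 with m
  refine Finset.sum_congr rfl fun n _ => ?_
  rw [Lop_adj]
  rfl


set_option maxHeartbeats 1000000 in
lemma coord_of_seq {f : ℕ → H₀} {g : l2 ℕ H₀} (hg : SeqSum (fun k => (Lop k (f k) : l2 ℕ H₀)) g)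
    (n : ℕ) : adjoint (Lop n) g = f n := by
  have h1 := ((adjoint (Lop n)).continuous.tendsto g).comp hg
  have h2 : ∀ m, n < m → adjoint (Lop n)
      (∑ k ∈ Finset.range m, (Lop k (f k) : l2 ℕ H₀)) = f n := by
    intro m hm
    rw [map_sum, Finset.sum_congr rfl (fun k _ => Lop_adj n _)]
    have : ∀ k, ((Lop k (f k) : l2 ℕ H₀) : ∀ _, H₀) n = if n = k then f k else 0 := by
      intro k
      by_cases hnk : n = k
      · subst hnk; simp [Lop_apply, lp.single_apply_self]
      · simp [Lop_apply, lp.single_apply_ne 2 k _ hnk, hnk]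
    rw [Finset.sum_congr rfl (fun k _ => this k), Finset.sum_ite_eq]
    simp [Finset.mem_range.mpr hm]
  have h3 : Tendsto (fun _ : ℕ => f n) atTop (nhds (adjoint (Lop n) g)) := by
    refine h1.congr' ?_
    filter_upwards [eventually_gt_atTop n] with m hm
    simp only [Function.comp_apply]
    exact h2 m hm
  exact tendsto_nhds_unique h3 tendsto_const_nhds

lemma adj_theta_single {X : ℕ → H →L[ℂ] H₀} {θ : H →L[ℂ] l2 ℕ H₀}
    (hθ : ∀ h : H, SeqSum (fun n => (Lop n (X n h) : l2 ℕ H₀)) (θ h)) (n : ℕ) (x : H₀) :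
    adjoint θ (Lop n x) = adjoint (X n) x := by
  apply ext_inner_right ℂ
  intro h
  rw [adjoint_inner_left, adjoint_inner_left, Lop_apply, lp.inner_single_left]
  congr 1
  have := coord_of_seq (hθ h) n
  rw [Lop_adj] at this
  exact this

lemma partial_adj {X : ℕ → H →L[ℂ] H₀} {θ : H →L[ℂ] l2 ℕ H₀}
    (hθ : ∀ h : H, SeqSum (fun n => (Lop n (X n h) : l2 ℕ H₀)) (θ h)) (m : ℕ) (y : l2 ℕ H₀) :
    ∑ n ∈ Finset.range m, adjoint (X n) (adjoint (Lop n) y) =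
      adjoint θ (∑ n ∈ Finset.range m, (Lop n (adjoint (Lop n) y) : l2 ℕ H₀)) := by
  rw [map_sum]
  exact Finset.sum_congr rfl fun n _ => (adj_theta_single hθ n _).symm

lemma adj_partial_tendsto {X : ℕ → H →L[ℂ] H₀} {θ : H →L[ℂ] l2 ℕ H₀}
    (hθ : ∀ h : H, SeqSum (fun n => (Lop n (X n h) : l2 ℕ H₀)) (θ h)) (y : l2 ℕ H₀) :
    Tendsto (fun m => ∑ n ∈ Finset.range m, adjoint (X n) (adjoint (Lop n) y))
      atTop (nhds (adjoint θ y)) := by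
  have := ((adjoint θ).continuous.tendsto y).comp (trunc_tendsto y)
  refine this.congr fun m => ?_
  exact (partial_adj hθ m y).symm



lemma norm_sum_Lop_le {X : ℕ → H →L[ℂ] H₀} {C : ℝ} (hC : 0 ≤ C)
    (hD : ∀ (m : ℕ) (y : l2 ℕ H₀),
      ‖∑ n ∈ Finset.range m, adjoint (X n) (adjoint (Lop n) y)‖ ≤ C * ‖y‖)
    (m : ℕ) (h : H) : ‖∑ n ∈ Finset.range m, (Lop n (X n h) : l2 ℕ H₀)‖ ≤ C * ‖h‖ := by
  have key : ∀ y : l2 ℕ H₀, (inner ℂ (∑ n ∈ Finset.range m, (Lop n (X n h) : l2 ℕ H₀)) y : ℂ) =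
      inner ℂ h (∑ n ∈ Finset.range m, adjoint (X n) (adjoint (Lop n) y)) := by
    intro y
    rw [sum_inner, inner_sum]
    refine Finset.sum_congr rfl fun n _ => ?_
    rw [← ContinuousLinearMap.adjoint_inner_right (Lop n) (X n h) y,
      ← ContinuousLinearMap.adjoint_inner_right (X n) h (adjoint (Lop n) y)]
  set g : l2 ℕ H₀ := ∑ n ∈ Finset.range m, (Lop n (X n h) : l2 ℕ H₀) with hg
  have h1 : ‖g‖ * ‖g‖ ≤ ‖h‖ * (C * ‖g‖) := by
    have hn := inner_self_eq_norm_mul_norm (𝕜 := ℂ) g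
    rw [key g] at hn
    calc ‖g‖ * ‖g‖ = RCLike.re ⟪h, ∑ n ∈ Finset.range m, adjoint (X n) (adjoint (Lop n) g)⟫ :=
          hn.symm
      _ ≤ ‖⟪h, ∑ n ∈ Finset.range m, adjoint (X n) (adjoint (Lop n) g)⟫‖ := RCLike.re_le_norm _
      _ ≤ ‖h‖ * ‖∑ n ∈ Finset.range m, adjoint (X n) (adjoint (Lop n) g)‖ := norm_inner_le_norm _ _
      _ ≤ ‖h‖ * (C * ‖g‖) := by
          have := hD m g
          have h0 : (0:ℝ) ≤ ‖h‖ := norm_nonneg _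
          nlinarith [hD m g]
  rcases (norm_nonneg g).eq_or_lt with h0 | h0
  · rw [← h0]
    exact mul_nonneg hC (norm_nonneg _)
  · have : ‖g‖ * ‖g‖ ≤ C * ‖h‖ * ‖g‖ := by nlinarith
    exact le_of_mul_le_mul_right this h0



lemma cc_lower {R : H →L[ℂ] H} {l1 l2 : ℝ} (h10 : 0 ≤ l1) (h11 : l1 < 1)
    (h20 : 0 ≤ l2) (h21 : l2 < 1)
    (hin : ∀ x, ‖x - R x‖ ≤ l1 * ‖x‖ + l2 * ‖R x‖)
    {t : ℝ} (ht0 : 0 ≤ t) (ht1 : t ≤ 1) (x : H) :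
    (1 - max l1 l2) / 2 * ‖x‖ ≤ ‖x + t • (R x - x)‖ := by
  set M := max l1 l2 with hM
  have hM0 : 0 ≤ M := le_trans h10 (le_max_left _ _)
  have hM1 : M < 1 := max_lt h11 h21
  have hl1M : l1 ≤ M := le_max_left _ _
  have hl2M : l2 ≤ M := le_max_right _ _
  set u := ‖x + t • (R x - x)‖ with hu
  set a := ‖x‖ with ha
  set b := ‖R x‖ with hb
  set d := ‖x - R x‖ with hd
  have hu0 : 0 ≤ u := norm_nonneg _
  have ha0 : 0 ≤ a := norm_nonneg _
  have hb0 : 0 ≤ b := norm_nonneg _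
  have hd0 : 0 ≤ d := norm_nonneg _
  have f3 : d ≤ l1 * a + l2 * b := hin x
  have f1 : a ≤ u + t * d := by
    have : x = (x + t • (R x - x)) + t • (x - R x) := by
      module
    calc a = ‖(x + t • (R x - x)) + t • (x - R x)‖ := by rw [ha]; exact congrArg _ this
      _ ≤ u + ‖t • (x - R x)‖ := norm_add_le _ _
      _ = u + t * d := by rw [norm_smul, Real.norm_eq_abs, abs_of_nonneg ht0, hd]
  have f2 : b ≤ u + (1 - t) * d := by
    have h1t : (0:ℝ) ≤ 1 - t := by linarith
    have : R x = (x + t • (R x - x)) + (1 - t) • (R x - x) := by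
      module
    calc b = ‖(x + t • (R x - x)) + (1 - t) • (R x - x)‖ := by rw [hb]; exact congrArg _ this
      _ ≤ u + ‖(1 - t) • (R x - x)‖ := norm_add_le _ _
      _ = u + (1 - t) * d := by
          rw [norm_smul, Real.norm_eq_abs, abs_of_nonneg h1t, norm_sub_rev, hd]
  by_cases hau : a ≤ u
  · nlinarith
  · push_neg at hau
    -- e1 : d * (1 - l2 + l2 * t) ≤ l1 * a + l2 * u
    have e1 : d * (1 - l2 + l2 * t) ≤ l1 * a + l2 * u := by nlinarith
    have hs0 : 0 < 1 - l2 + l2 * t := by nlinarith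
    -- e2 : (a - u) * (1 - l2 + l2 * t) ≤ t * (l1 * a + l2 * u)
    have e2 : (a - u) * (1 - l2 + l2 * t) ≤ t * (l1 * a + l2 * u) := by nlinarith
    -- conclude
    nlinarith [mul_nonneg ha0 (sub_nonneg.mpr hl2M), mul_nonneg hu0 h20,
      mul_nonneg (mul_nonneg ht0 ha0) (sub_nonneg.mpr hl1M),
      mul_nonneg (mul_nonneg ht0 hu0) h20]

lemma cc_isUnit {R : H →L[ℂ] H} {l1 l2 : ℝ} (h10 : 0 ≤ l1) (h11 : l1 < 1)
    (h20 : 0 ≤ l2) (h21 : l2 < 1)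
    (hin : ∀ x, ‖x - R x‖ ≤ l1 * ‖x‖ + l2 * ‖R x‖) : IsUnit R := by
  set m : ℝ := (1 - max l1 l2) / 2 with hm
  have hm0 : 0 < m := by
    have : max l1 l2 < 1 := max_lt h11 h21
    rw [hm]; linarith
  set E : H →L[ℂ] H := R - 1 with hE
  set K := ‖E‖ with hK
  have hK0 : 0 ≤ K := norm_nonneg _
  obtain ⟨N, hNpos, hKN⟩ : ∃ N : ℕ, 0 < N ∧ K / N < m := by
    refine ⟨Nat.ceil (K / m) + 1, Nat.succ_pos _, ?_⟩
    have h1 : K / m < ((Nat.ceil (K / m) + 1 : ℕ) : ℝ) := by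
      push_cast
      calc K / m ≤ Nat.ceil (K / m) := Nat.le_ceil _
        _ < (Nat.ceil (K / m) : ℝ) + 1 := by norm_num
    have hNpos' : (0:ℝ) < ((Nat.ceil (K / m) + 1 : ℕ) : ℝ) := by positivity
    rw [div_lt_iff₀ hNpos']
    calc K = (K / m) * m := by field_simp
      _ < ((Nat.ceil (K / m) + 1 : ℕ) : ℝ) * m := mul_lt_mul_of_pos_right h1 hm0
      _ = m * ((Nat.ceil (K / m) + 1 : ℕ) : ℝ) := mul_comm _ _
  have hNR : (0:ℝ) < N := by exact_mod_cast hNpos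
  -- uniform lower bound for U_t := 1 + t • E
  have hlow : ∀ t : ℝ, 0 ≤ t → t ≤ 1 → ∀ x : H, m * ‖x‖ ≤ ‖(1 + t • E) x‖ := by
    intro t ht0 ht1 x
    have : ((1 + t • E) x : H) = x + t • (R x - x) := by
      simp [hE, ContinuousLinearMap.add_apply, ContinuousLinearMap.smul_apply,
        ContinuousLinearMap.sub_apply, ContinuousLinearMap.one_apply]
    rw [this]
    exact cc_lower h10 h11 h20 h21 hin ht0 ht1 x
  -- induction
  have main : ∀ k : ℕ, k ≤ N → IsUnit ((1 : H →L[ℂ] H) + ((k : ℝ) / N) • E) := by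
    intro k
    induction k with
    | zero => intro _; simp
    | succ k ih =>
      intro hkN
      have hk : k ≤ N := Nat.le_of_succ_le hkN
      obtain ⟨u, hu⟩ := ih hk
      have htk0 : (0:ℝ) ≤ (k : ℝ) / N := by positivity
      have htk1 : (k : ℝ) / N ≤ 1 := by
        rw [div_le_one hNR]; exact_mod_cast hk
      have hlowk : ∀ x : H, m * ‖x‖ ≤ ‖((u : H →L[ℂ] H)) x‖ := by
        intro x
        rw [hu]
        exact hlow _ htk0 htk1 x
      -- norm bound on u⁻¹
      have hinv : ‖((u⁻¹ : (H →L[ℂ] H)ˣ) : H →L[ℂ] H)‖ ≤ 1 / m := by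
        refine ContinuousLinearMap.opNorm_le_bound _ (by positivity) fun y => ?_
        have h1 : m * ‖((u⁻¹ : (H →L[ℂ] H)ˣ) : H →L[ℂ] H) y‖ ≤
            ‖(u : H →L[ℂ] H) (((u⁻¹ : (H →L[ℂ] H)ˣ) : H →L[ℂ] H) y)‖ := hlowk _
        have h2 : (u : H →L[ℂ] H) (((u⁻¹ : (H →L[ℂ] H)ˣ) : H →L[ℂ] H) y) = y := by
          have := u.mul_inv
          calc (u : H →L[ℂ] H) (((u⁻¹ : (H →L[ℂ] H)ˣ) : H →L[ℂ] H) y)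
              = (((u : H →L[ℂ] H) * ((u⁻¹ : (H →L[ℂ] H)ˣ) : H →L[ℂ] H)) : H →L[ℂ] H) y := rfl
            _ = y := by rw [this]; rfl
        rw [h2] at h1
        rw [div_mul_eq_mul_div, le_div_iff₀ hm0]
        linarith
      -- the perturbation
      set w : H →L[ℂ] H := ((u⁻¹ : (H →L[ℂ] H)ˣ) : H →L[ℂ] H) * (((1:ℝ) / N) • E) with hw
      have hwnorm : ‖w‖ < 1 := by
        have h1 : ‖w‖ ≤ ‖((u⁻¹ : (H →L[ℂ] H)ˣ) : H →L[ℂ] H)‖ * ‖((1:ℝ) / N) • E‖ :=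
          norm_mul_le _ _
        have h2 : ‖((1:ℝ) / N) • E‖ = K / N := by
          rw [norm_smul, Real.norm_eq_abs, abs_of_nonneg (by positivity), hK]
          ring
        rw [h2] at h1
        calc ‖w‖ ≤ ‖((u⁻¹ : (H →L[ℂ] H)ˣ) : H →L[ℂ] H)‖ * (K / N) := h1
          _ ≤ (1 / m) * (K / N) := by
              apply mul_le_mul_of_nonneg_right hinv (by positivity)
          _ < (1 / m) * m := by
              apply mul_lt_mul_of_pos_left hKN (by positivity)
          _ = 1 := by field_simp
      have hunit1w : IsUnit ((1 : H →L[ℂ] H) + w) := by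
        have : ‖-w‖ < 1 := by rwa [norm_neg]
        have h3 := (Units.oneSub (-w) this).isUnit
        rwa [Units.val_oneSub, sub_neg_eq_add] at h3
      have hfactor : (1 : H →L[ℂ] H) + (((k+1 : ℕ) : ℝ) / N) • E =
          (u : H →L[ℂ] H) * ((1 : H →L[ℂ] H) + w) := by
        rw [mul_add, mul_one, hw, ← mul_assoc, u.mul_inv, one_mul, hu]
        push_cast
        rw [add_div, add_smul]
        abel
      rw [hfactor]
      exact u.isUnit.mul hunit1w
  have := main N le_rfl
  rw [div_self (ne_of_gt hNR), one_smul, hE] at this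
  simpa using this


set_option maxHeartbeats 4000000 in
/-- Paley–Wiener-type perturbation of a factorable weak OVF `((Aₙ),(Ψₙ))`
(frame operator `S`, inverse `T`): under the three-constant perturbation inequality,
`((Bₙ),(Ψₙ))` is a factorable weak OVF with the stated frame bounds. -/
theorem stmt18
    (A Ψ : ℕ → H →L[ℂ] H₀) (S T : H →L[ℂ] H)
    (hS : ∀ h : H, SeqSum (fun n => adjoint (Ψ n) (A n h)) (S h))
    (hST : S ∘L T = 1) (hTS : T ∘L S = 1)
    (θA θΨ : H →L[ℂ] l2 ℕ H₀)
    (hθA : ∀ h : H, SeqSum (fun n => Lop n (A n h)) (θA h))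
    (hθΨ : ∀ h : H, SeqSum (fun n => Lop n (Ψ n h)) (θΨ h))
    (B : ℕ → H →L[ℂ] H₀) (α β γ : ℝ)
    (hα : 0 ≤ α) (hβ : 0 ≤ β) (hγ : 0 ≤ γ)
    (hmax : max (α + γ * ‖θΨ ∘L adjoint T‖) β < 1)
    (hpert : ∀ (m : ℕ) (y : l2 ℕ H₀),
      ‖∑ n ∈ Finset.range m, (adjoint (A n) - adjoint (B n)) (adjoint (Lop n) y)‖ ≤
        α * ‖∑ n ∈ Finset.range m, adjoint (A n) (adjoint (Lop n) y)‖ +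
        β * ‖∑ n ∈ Finset.range m, adjoint (B n) (adjoint (Lop n) y)‖ +
        γ * Real.sqrt (∑ n ∈ Finset.range m, ‖adjoint (Lop n) y‖ ^ 2)) :
    ∃ (θB : H →L[ℂ] l2 ℕ H₀) (S' : H →L[ℂ] H),
      (∀ h : H, SeqSum (fun n => Lop n (B n h)) (θB h)) ∧
      (∀ h : H, SeqSum (fun n => adjoint (Ψ n) (B n h)) (S' h)) ∧
      IsUnit S' ∧
      (∀ h : H,
        (1 - (α + γ * ‖θΨ ∘L adjoint T‖)) / ((1 + β) * ‖adjoint T‖) * ‖h‖ ≤ ‖S' h‖ ∧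
        ‖S' h‖ ≤ ‖θΨ‖ * ((1 + α) * ‖θA‖ + γ) / (1 - β) * ‖h‖) := by
  have hk1 : α + γ * ‖θΨ ∘L adjoint T‖ < 1 := lt_of_le_of_lt (le_max_left _ _) hmax
  have hβ1 : β < 1 := lt_of_le_of_lt (le_max_right _ _) hmax
  have h1β : (0:ℝ) < 1 - β := by linarith
  have hk0 : 0 ≤ α + γ * ‖θΨ ∘L adjoint T‖ := by positivity
  set C : ℝ := ((1 + α) * ‖θA‖ + γ) / (1 - β) with hCdef
  have hC0 : 0 ≤ C := by positivity
  -- ‖θA adjoint‖ = ‖θA‖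
  have hadjnormA : ‖adjoint θA‖ = ‖θA‖ := ContinuousLinearMap.adjoint.norm_map θA
  have hadjnormΨ : ‖adjoint θΨ‖ = ‖θΨ‖ := ContinuousLinearMap.adjoint.norm_map θΨ
  -- truncation norm bound
  have hPm : ∀ (m : ℕ) (y : l2 ℕ H₀),
      ‖∑ n ∈ Finset.range m, (Lop n (adjoint (Lop n) y) : l2 ℕ H₀)‖ ≤ ‖y‖ := by
    intro m y
    have h1 : ‖∑ n ∈ Finset.range m, (Lop n (adjoint (Lop n) y) : l2 ℕ H₀)‖ ^ 2 ≤ ‖y‖ ^ 2 := by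
      rw [norm_sum_Lop (fun n => adjoint (Lop n) y) (Finset.range m)]
      exact sum_sq_coord_le y (Finset.range m)
    calc ‖∑ n ∈ Finset.range m, (Lop n (adjoint (Lop n) y) : l2 ℕ H₀)‖
        = Real.sqrt (‖∑ n ∈ Finset.range m, (Lop n (adjoint (Lop n) y) : l2 ℕ H₀)‖ ^ 2) :=
          (Real.sqrt_sq (norm_nonneg _)).symm
      _ ≤ Real.sqrt (‖y‖ ^ 2) := Real.sqrt_le_sqrt h1
      _ = ‖y‖ := Real.sqrt_sq (norm_nonneg _)
  -- sqrt coordinate bound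
  have hsqrt : ∀ (m : ℕ) (y : l2 ℕ H₀),
      Real.sqrt (∑ n ∈ Finset.range m, ‖adjoint (Lop n) y‖ ^ 2) ≤ ‖y‖ := by
    intro m y
    calc Real.sqrt (∑ n ∈ Finset.range m, ‖adjoint (Lop n) y‖ ^ 2)
        ≤ Real.sqrt (‖y‖ ^ 2) := Real.sqrt_le_sqrt (sum_sq_coord_le y _)
      _ = ‖y‖ := Real.sqrt_sq (norm_nonneg _)
  -- bound on A-partial adjoint sums
  have hDA : ∀ (m : ℕ) (y : l2 ℕ H₀),
      ‖∑ n ∈ Finset.range m, adjoint (A n) (adjoint (Lop n) y)‖ ≤ ‖θA‖ * ‖y‖ := by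
    intro m y
    rw [partial_adj hθA m y]
    calc ‖adjoint θA (∑ n ∈ Finset.range m, (Lop n (adjoint (Lop n) y) : l2 ℕ H₀))‖
        ≤ ‖adjoint θA‖ * ‖∑ n ∈ Finset.range m, (Lop n (adjoint (Lop n) y) : l2 ℕ H₀)‖ :=
          ContinuousLinearMap.le_opNorm _ _
      _ ≤ ‖θA‖ * ‖y‖ := by
          rw [hadjnormA]
          exact mul_le_mul_of_nonneg_left (hPm m y) (norm_nonneg θA)
  -- splitting the difference sum
  have hsplit : ∀ (m : ℕ) (y : l2 ℕ H₀),
      ∑ n ∈ Finset.range m, (adjoint (A n) - adjoint (B n)) (adjoint (Lop n) y) =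
        ∑ n ∈ Finset.range m, adjoint (A n) (adjoint (Lop n) y) -
        ∑ n ∈ Finset.range m, adjoint (B n) (adjoint (Lop n) y) := by
    intro m y
    rw [← Finset.sum_sub_distrib]
    exact Finset.sum_congr rfl fun n _ => rfl
  -- bound on B-partial adjoint sums
  have hDB : ∀ (m : ℕ) (y : l2 ℕ H₀),
      ‖∑ n ∈ Finset.range m, adjoint (B n) (adjoint (Lop n) y)‖ ≤ C * ‖y‖ := by
    intro m y
    have hp := hpert m y
    rw [hsplit m y] at hp
    set a := ‖∑ n ∈ Finset.range m, adjoint (A n) (adjoint (Lop n) y)‖ with hadef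
    set b := ‖∑ n ∈ Finset.range m, adjoint (B n) (adjoint (Lop n) y)‖ with hbdef
    have htri : b ≤ a + ‖∑ n ∈ Finset.range m, adjoint (A n) (adjoint (Lop n) y) -
        ∑ n ∈ Finset.range m, adjoint (B n) (adjoint (Lop n) y)‖ :=
      norm_le_norm_add_norm_sub _ _
    have hsq := hsqrt m y
    have hA := hDA m y
    rw [hCdef, div_mul_eq_mul_div, le_div_iff₀ h1β]
    nlinarith [mul_le_mul_of_nonneg_left hsq hγ, norm_nonneg y]
  -- bound on B partial sums in l2
  have hgB : ∀ (m : ℕ) (h : H),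
      ‖∑ n ∈ Finset.range m, (Lop n (B n h) : l2 ℕ H₀)‖ ≤ C * ‖h‖ :=
    norm_sum_Lop_le hC0 hDB
  -- existence of limits for θB
  have hFex : ∀ h : H, ∃ x : l2 ℕ H₀,
      Tendsto (fun m => ∑ n ∈ Finset.range m, (Lop n (B n h) : l2 ℕ H₀)) atTop (nhds x) := by
    intro h
    apply cauchySeq_tendsto_of_complete
    -- Cauchy via summability of squared norms
    have hsum : Summable (fun n => ‖B n h‖ ^ 2) := by
      apply summable_of_sum_range_le (fun n => sq_nonneg _) (c := (C * ‖h‖) ^ 2)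
      intro m
      rw [← norm_sum_Lop (fun n => B n h) (Finset.range m)]
      exact pow_le_pow_left₀ (norm_nonneg _) (hgB m h) 2
    have htend := hsum.hasSum.tendsto_sum_nat
    have htc : CauchySeq (fun m => ∑ n ∈ Finset.range m, ‖B n h‖ ^ 2) := htend.cauchySeq
    rw [Metric.cauchySeq_iff] at htc ⊢
    intro ε hε
    obtain ⟨N, hN⟩ := htc (ε ^ 2) (by positivity)
    refine ⟨N, fun p hp q hq => ?_⟩
    -- wlog q ≤ p
    have key : ∀ p q : ℕ, q ≤ p → N ≤ p → N ≤ q →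
        dist (∑ n ∈ Finset.range p, (Lop n (B n h) : l2 ℕ H₀))
             (∑ n ∈ Finset.range q, (Lop n (B n h) : l2 ℕ H₀)) < ε := by
      intro p q hqp hp hq
      have hd2 : dist (∑ n ∈ Finset.range p, (Lop n (B n h) : l2 ℕ H₀))
          (∑ n ∈ Finset.range q, (Lop n (B n h) : l2 ℕ H₀)) ^ 2 =
          ∑ n ∈ Finset.Ico q p, ‖B n h‖ ^ 2 := by
        rw [dist_eq_norm, ← Finset.sum_Ico_eq_sub _ hqp,
          norm_sum_Lop (fun n => B n h) (Finset.Ico q p)]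
      have hd3 : ∑ n ∈ Finset.Ico q p, ‖B n h‖ ^ 2 < ε ^ 2 := by
        have := hN p hp q hq
        rw [Real.dist_eq, ← Finset.sum_Ico_eq_sub _ hqp] at this
        calc ∑ n ∈ Finset.Ico q p, ‖B n h‖ ^ 2
            ≤ |∑ n ∈ Finset.Ico q p, ‖B n h‖ ^ 2| := le_abs_self _
          _ < ε ^ 2 := this
      have := hd2 ▸ hd3
      exact lt_of_pow_lt_pow_left₀ 2 (le_of_lt hε) this
    rcases le_total q p with hqp | hpq
    · exact key p q hqp hp hq
    · rw [dist_comm]; exact key q p hpq hq hp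
  choose F hF using hFex
  -- θB as a continuous linear map
  have hFadd : ∀ x y : H, F (x + y) = F x + F y := by
    intro x y
    refine tendsto_nhds_unique (hF (x + y)) ?_
    refine ((hF x).add (hF y)).congr fun m => ?_
    rw [← Finset.sum_add_distrib]
    exact Finset.sum_congr rfl fun n _ => by rw [← map_add, ← map_add]
  have hFsmul : ∀ (c : ℂ) (x : H), F (c • x) = c • F x := by
    intro c x
    refine tendsto_nhds_unique (hF (c • x)) ?_
    refine ((hF x).const_smul c).congr fun m => ?_
    rw [Finset.smul_sum]
    exact Finset.sum_congr rfl fun n _ => by rw [← map_smul, ← map_smul]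
  set θB : H →L[ℂ] l2 ℕ H₀ := LinearMap.mkContinuous
    { toFun := F
      map_add' := hFadd
      map_smul' := hFsmul } C
    (fun h => le_of_tendsto (hF h).norm (Eventually.of_forall fun m => hgB m h)) with hθBdef
  have hθB : ∀ h : H, SeqSum (fun n => (Lop n (B n h) : l2 ℕ H₀)) (θB h) := fun h => hF h
  have hθBnorm : ∀ h : H, ‖θB h‖ ≤ C * ‖h‖ := by
    intro h
    exact le_of_tendsto (hF h).norm (Eventually.of_forall fun m => hgB m h)
  -- S'
  set S' : H →L[ℂ] H := adjoint θΨ ∘L θB with hS'def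
  have hS' : ∀ h : H, SeqSum (fun n => adjoint (Ψ n) (B n h)) (S' h) := by
    intro h
    have h1 := ((adjoint θΨ).continuous.tendsto (θB h)).comp (hθB h)
    refine h1.congr fun m => ?_
    simp only [Function.comp_apply]
    rw [map_sum]
    exact Finset.sum_congr rfl fun n _ => adj_theta_single hθΨ n _
  -- S = adjoint θΨ ∘L θA
  have hSfact : S = adjoint θΨ ∘L θA := by
    ext h
    have h1 := ((adjoint θΨ).continuous.tendsto (θA h)).comp (hθA h)
    have h2 : Tendsto (fun m => ∑ n ∈ Finset.range m, adjoint (Ψ n) (A n h)) atTop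
        (nhds ((adjoint θΨ ∘L θA) h)) := by
      refine h1.congr fun m => ?_
      simp only [Function.comp_apply]
      rw [map_sum]
      exact Finset.sum_congr rfl fun n _ => adj_theta_single hθΨ n _
    exact tendsto_nhds_unique (hS h) h2
  -- limiting perturbation inequality
  have pert_lim : ∀ y : l2 ℕ H₀, ‖adjoint θA y - adjoint θB y‖ ≤
      α * ‖adjoint θA y‖ + β * ‖adjoint θB y‖ + γ * ‖y‖ := by
    intro y
    have lA := adj_partial_tendsto hθA y
    have lB := adj_partial_tendsto hθB y
    have hLHS := (lA.sub lB).norm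
    have hRHS := ((lA.norm.const_mul α).add (lB.norm.const_mul β)).add
      (tendsto_const_nhds (x := γ * ‖y‖))
    refine le_of_tendsto_of_tendsto' hLHS hRHS fun m => ?_
    have hp := hpert m y
    rw [hsplit m y] at hp
    have hs := mul_le_mul_of_nonneg_left (hsqrt m y) hγ
    linarith
  -- the operator R
  set R : H →L[ℂ] H := adjoint θB ∘L (θΨ ∘L adjoint T) with hRdef
  -- identity : adjoint θA ∘L (θΨ ∘L adjoint T) = 1
  have hadj1 : adjoint (1 : H →L[ℂ] H) = 1 := by
    rw [ContinuousLinearMap.one_def, adjoint_id]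
  have hop : adjoint θA ∘L (θΨ ∘L adjoint T) = 1 := by
    have h1 : adjoint S = adjoint θA ∘L θΨ := by
      rw [hSfact, adjoint_comp, adjoint_adjoint]
    have h2 : adjoint θA ∘L (θΨ ∘L adjoint T) = (adjoint θA ∘L θΨ) ∘L adjoint T := by
      ext x; rfl
    rw [h2, ← h1, ← adjoint_comp, hTS, hadj1]
  -- key inequality for R
  set k : ℝ := α + γ * ‖θΨ ∘L adjoint T‖ with hkdef
  have key : ∀ h : H, ‖h - R h‖ ≤ k * ‖h‖ + β * ‖R h‖ := by
    intro h
    have hpl := pert_lim ((θΨ ∘L adjoint T) h)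
    have hAid : adjoint θA ((θΨ ∘L adjoint T) h) = h := by
      have := ContinuousLinearMap.ext_iff.mp hop h
      simpa using this
    have hBid : adjoint θB ((θΨ ∘L adjoint T) h) = R h := rfl
    rw [hAid, hBid] at hpl
    have hy : ‖(θΨ ∘L adjoint T) h‖ ≤ ‖θΨ ∘L adjoint T‖ * ‖h‖ :=
      ContinuousLinearMap.le_opNorm _ _
    have := mul_le_mul_of_nonneg_left hy hγ
    rw [hkdef]
    nlinarith
  -- R is a unit
  obtain ⟨r, hr⟩ := cc_isUnit hk0 hk1 hβ hβ1 key
  have h1k : (0:ℝ) < 1 - k := by rw [hkdef]; linarith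
  -- lower bound for R
  have hRlow : ∀ x : H, (1 - k) * ‖x‖ ≤ (1 + β) * ‖R x‖ := by
    intro x
    have h1 : ‖x‖ ≤ ‖x - R x‖ + ‖R x‖ := by
      calc ‖x‖ = ‖(x - R x) + R x‖ := by rw [sub_add_cancel]
        _ ≤ ‖x - R x‖ + ‖R x‖ := norm_add_le _ _
    have h2 := key x
    nlinarith [norm_nonneg (R x), norm_nonneg x]
  -- structure of S'
  have hS'adj : adjoint S' = adjoint θB ∘L θΨ := by
    rw [hS'def, adjoint_comp, adjoint_adjoint]
  have hR1 : R = adjoint S' ∘L adjoint T := by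
    rw [hS'adj]; ext x; rfl
  have hadjR : adjoint R = T ∘L S' := by
    rw [hR1, adjoint_comp, adjoint_adjoint, adjoint_adjoint]
  have hS'eq : S' = S ∘L adjoint R := by
    rw [hadjR]
    ext x
    have := ContinuousLinearMap.ext_iff.mp hST (S' x)
    simp only [ContinuousLinearMap.comp_apply, ContinuousLinearMap.one_apply] at this ⊢
    exact this.symm
  -- units
  have hadjRunit : IsUnit (adjoint R) := by
    refine ⟨⟨adjoint R, adjoint ((r⁻¹ : (H →L[ℂ] H)ˣ) : H →L[ℂ] H), ?_, ?_⟩, rfl⟩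
    · show adjoint R ∘L adjoint ((r⁻¹ : (H →L[ℂ] H)ˣ) : H →L[ℂ] H) = 1
      rw [← adjoint_comp]
      have : ((r⁻¹ : (H →L[ℂ] H)ˣ) : H →L[ℂ] H) ∘L R = 1 := by
        rw [← hr, ← ContinuousLinearMap.mul_def, r.inv_mul]
      rw [this, hadj1]
    · show adjoint ((r⁻¹ : (H →L[ℂ] H)ˣ) : H →L[ℂ] H) ∘L adjoint R = 1
      rw [← adjoint_comp]
      have : R ∘L ((r⁻¹ : (H →L[ℂ] H)ˣ) : H →L[ℂ] H) = 1 := by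
        rw [← hr, ← ContinuousLinearMap.mul_def, r.mul_inv]
      rw [this, hadj1]
  have hSunit : IsUnit S := ⟨⟨S, T, hST, hTS⟩, rfl⟩
  have hS'unit : IsUnit S' := by
    rw [hS'eq]
    exact hSunit.mul hadjRunit
  -- norm bound on r⁻¹
  have hrinv : ‖((r⁻¹ : (H →L[ℂ] H)ˣ) : H →L[ℂ] H)‖ ≤ (1 + β) / (1 - k) := by
    refine ContinuousLinearMap.opNorm_le_bound _ (by positivity) fun y => ?_
    have h1 := hRlow (((r⁻¹ : (H →L[ℂ] H)ˣ) : H →L[ℂ] H) y)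
    have h2 : R (((r⁻¹ : (H →L[ℂ] H)ˣ) : H →L[ℂ] H) y) = y := by
      calc R (((r⁻¹ : (H →L[ℂ] H)ˣ) : H →L[ℂ] H) y)
          = ((R ∘L ((r⁻¹ : (H →L[ℂ] H)ˣ) : H →L[ℂ] H)) : H →L[ℂ] H) y := rfl
        _ = y := by
            rw [← hr, ← ContinuousLinearMap.mul_def, r.mul_inv]; rfl
    rw [h2] at h1
    rw [div_mul_eq_mul_div, le_div_iff₀ h1k]
    nlinarith [norm_nonneg y]
  -- left inverse of S'
  have hV : (adjoint ((r⁻¹ : (H →L[ℂ] H)ˣ) : H →L[ℂ] H) ∘L T) ∘L S' = 1 := by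
    have hA2 : adjoint ((r⁻¹ : (H →L[ℂ] H)ˣ) : H →L[ℂ] H) ∘L adjoint R = 1 := by
      rw [← adjoint_comp]
      have : R ∘L ((r⁻¹ : (H →L[ℂ] H)ˣ) : H →L[ℂ] H) = 1 := by
        rw [← hr, ← ContinuousLinearMap.mul_def, r.mul_inv]
      rw [this, hadj1]
    ext x
    have h3 : T (S' x) = adjoint R x := by
      have := ContinuousLinearMap.ext_iff.mp hadjR x
      simp only [ContinuousLinearMap.comp_apply] at this
      exact this.symm
    have h4 := ContinuousLinearMap.ext_iff.mp hA2 x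
    simp only [ContinuousLinearMap.comp_apply, ContinuousLinearMap.one_apply] at h3 h4 ⊢
    rw [h3, h4]
  -- assemble
  refine ⟨θB, S', hθB, hS', hS'unit, fun h => ⟨?_, ?_⟩⟩
  · -- lower bound
    by_cases haT : ‖adjoint T‖ = 0
    · rw [haT, mul_zero, div_zero, zero_mul]
      exact norm_nonneg _
    · have hTa : 0 < ‖adjoint T‖ :=
        lt_of_le_of_ne (norm_nonneg _) (Ne.symm haT)
      have hTnorm : ‖adjoint T‖ = ‖T‖ := ContinuousLinearMap.adjoint.norm_map T
      have hh : ‖h‖ ≤ ((1 + β) / (1 - k)) * (‖adjoint T‖ * ‖S' h‖) := by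
        have h0 : h = adjoint ((r⁻¹ : (H →L[ℂ] H)ˣ) : H →L[ℂ] H) (T (S' h)) := by
          have := ContinuousLinearMap.ext_iff.mp hV h
          simp only [ContinuousLinearMap.comp_apply, ContinuousLinearMap.one_apply] at this
          exact this.symm
        calc ‖h‖ = ‖adjoint ((r⁻¹ : (H →L[ℂ] H)ˣ) : H →L[ℂ] H) (T (S' h))‖ := by rw [← h0]
          _ ≤ ‖adjoint ((r⁻¹ : (H →L[ℂ] H)ˣ) : H →L[ℂ] H)‖ * ‖T (S' h)‖ :=
              ContinuousLinearMap.le_opNorm _ _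
          _ ≤ ‖adjoint ((r⁻¹ : (H →L[ℂ] H)ˣ) : H →L[ℂ] H)‖ * (‖T‖ * ‖S' h‖) := by
              apply mul_le_mul_of_nonneg_left (ContinuousLinearMap.le_opNorm _ _)
                (norm_nonneg _)
          _ ≤ ((1 + β) / (1 - k)) * (‖adjoint T‖ * ‖S' h‖) := by
              rw [hTnorm]
              apply mul_le_mul_of_nonneg_right _ (by positivity)
              rw [ContinuousLinearMap.adjoint.norm_map]
              exact hrinv
      show (1 - k) / ((1 + β) * ‖adjoint T‖) * ‖h‖ ≤ ‖S' h‖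
      rw [div_mul_eq_mul_div, div_le_iff₀ (by positivity)]
      have hmul := mul_le_mul_of_nonneg_left hh (le_of_lt h1k)
      have hfld : (1 - k) * (((1 + β) / (1 - k)) * (‖adjoint T‖ * ‖S' h‖)) =
          (1 + β) * (‖adjoint T‖ * ‖S' h‖) := by
        field_simp
      rw [hfld] at hmul
      nlinarith
  · -- upper bound
    have h1 : ‖S' h‖ ≤ ‖adjoint θΨ‖ * ‖θB h‖ :=
      ContinuousLinearMap.le_opNorm (adjoint θΨ) (θB h)
    have h2 : ‖S' h‖ ≤ ‖θΨ‖ * (C * ‖h‖) := by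
      rw [hadjnormΨ] at h1
      calc ‖S' h‖ ≤ ‖θΨ‖ * ‖θB h‖ := h1
        _ ≤ ‖θΨ‖ * (C * ‖h‖) :=
            mul_le_mul_of_nonneg_left (hθBnorm h) (norm_nonneg θΨ)
    calc ‖S' h‖ ≤ ‖θΨ‖ * (C * ‖h‖) := h2
      _ = ‖θΨ‖ * ((1 + α) * ‖θA‖ + γ) / (1 - β) * ‖h‖ := by
          rw [hCdef]; ring
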